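/- (Coarse Rudin inequality) Let ν be a probability measure on ℤⁿ, let κ > 0, and let η ∈ [0,1] be such that |ν̂(ζ)| ≤ η whenever ‖ζ‖_{𝕋ⁿ} ≥ κ. Let T ⊆ 𝕋ⁿ be a finite κ-dissociated set and c : T → ℂ, and define F(x) := Re ∑_{ξ∈T} c(ξ)·exp(2πi⟨ξ,x⟩) for x ∈ ℤⁿ. Then for every σ ≥ 0, E_{x∼ν} exp(σ·F(x)) ≤ exp((σ²/2)·∑_{ξ∈T}|c(ξ)|²) + η·exp(σ·∑_{ξ∈T}|c(ξ)|). -/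

import Mathlib

open scoped BigOperators

noncomputable section

/-- Euclidean norm of a real vector. -/
def l2 {m : ℕ} (x : Fin m → ℝ) : ℝ := Real.sqrt (∑ i, x i ^ 2)

/-- Euclidean norm of an integer vector. -/
def l2Z {m : ℕ} (x : Fin m → ℤ) : ℝ := l2 (fun i => (x i : ℝ))

/-- The torus norm: distance from a representative `ζ` of a point of
`𝕋ⁿ = (ℝ/ℤ)ⁿ` to the nearest point of the integer lattice `ℤⁿ`. -/
def tnorm {m : ℕ} (ζ : Fin m → ℝ) : ℝ := ⨅ z : Fin m → ℤ, l2 (fun i => ζ i - z i)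

/-- The discrete Gaussian probability mass function of radius `R` on `ℤⁿ`:
`γ_R(x) = exp(-π‖x‖²/R²) / ∑_y exp(-π‖y‖²/R²)`. -/
def dgauss (n : ℕ) (R : ℝ) (x : Fin n → ℤ) : ℝ :=
  Real.exp (-Real.pi * l2Z x ^ 2 / R ^ 2) /
    ∑' y : Fin n → ℤ, Real.exp (-Real.pi * l2Z y ^ 2 / R ^ 2)

/-- `μ` is a probability mass function on `ℤⁿ`. -/
def IsPMF {n : ℕ} (μ : (Fin n → ℤ) → ℝ) : Prop := (∀ x, 0 ≤ μ x) ∧ HasSum μ 1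

/-- The pairing `⟨ζ, x⟩ = ∑ i, ζ i * x i` of a torus representative and a lattice point. -/
def pair {n : ℕ} (ζ : Fin n → ℝ) (x : Fin n → ℤ) : ℝ := ∑ i, ζ i * (x i : ℝ)

/-- The Fourier transform `μ̂(ζ) = ∑ₓ μ(x)·exp(-2πi⟨ζ,x⟩)` of `μ : ℤⁿ → ℝ`,
evaluated at a representative of a torus point. -/
def ft {n : ℕ} (μ : (Fin n → ℤ) → ℝ) (ζ : Fin n → ℝ) : ℂ :=
  ∑' x : Fin n → ℤ, (μ x : ℂ) * Complex.exp (-(2 * (Real.pi : ℂ) * Complex.I) * (pair ζ x : ℂ))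

/-- A finite set `T` of torus points (given by representatives) is `κ`-dissociated:
every nontrivial `{-1,0,1}`-combination of its elements has torus norm at least `κ`. -/
def Dissociated {n : ℕ} (κ : ℝ) (T : Finset (Fin n → ℝ)) : Prop :=
  ∀ ε : (Fin n → ℝ) → ℤ, (∀ ξ, ε ξ = -1 ∨ ε ξ = 0 ∨ ε ξ = 1) →
    (∃ ξ ∈ T, ε ξ ≠ 0) →
    κ ≤ tnorm (fun i => ∑ ξ ∈ T, (ε ξ : ℝ) * ξ i)

private lemma rudin_exp_le (t r : ℝ) (hr : |r| ≤ t) :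
    Real.exp r ≤ Real.cosh t + (if t = 0 then 0 else Real.sinh t / t) * r := by
  have ht : 0 ≤ t := le_trans (abs_nonneg r) hr
  rcases eq_or_lt_of_le ht with h0 | h0
  · have hr0 : r = 0 := abs_eq_zero.mp (le_antisymm (h0 ▸ hr) (abs_nonneg r))
    simp [hr0, ← h0]
  · have htne : t ≠ 0 := ne_of_gt h0
    rw [if_neg htne]
    set v := r / t with hv
    have hv1 : |v| ≤ 1 := by
      rw [hv, abs_div, abs_of_pos h0, div_le_one h0]; exact hr
    have hva : -1 ≤ v := neg_le_of_abs_le hv1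
    have hvb : v ≤ 1 := le_of_abs_le hv1
    have key := convexOn_exp.2 (Set.mem_univ t) (Set.mem_univ (-t))
      (by linarith : (0:ℝ) ≤ (1 + v)/2) (by linarith : (0:ℝ) ≤ (1 - v)/2) (by ring)
    simp only [smul_eq_mul] at key
    have hvt : v * t = r := div_mul_cancel₀ r htne
    have h1 : (1 + v)/2 * t + (1 - v)/2 * -t = r := by rw [← hvt]; ring
    rw [h1] at key
    have h2 : (1 + v)/2 * Real.exp t + (1 - v)/2 * Real.exp (-t)
        = Real.cosh t + v * Real.sinh t := by
      rw [Real.cosh_eq, Real.sinh_eq]; ring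
    rw [h2] at key
    calc Real.exp r ≤ Real.cosh t + v * Real.sinh t := key
      _ = Real.cosh t + Real.sinh t / t * r := by rw [← hvt]; field_simp


set_option maxHeartbeats 1000000 in
/-- **Coarse Rudin inequality** (Lemma 4.7). -/
theorem coarse_rudin
    (n : ℕ) (ν : (Fin n → ℤ) → ℝ) (hν : IsPMF ν)
    (κ : ℝ) (hκ : 0 < κ) (η : ℝ) (hη : η ∈ Set.Icc (0:ℝ) 1)
    (hspec : ∀ ζ : Fin n → ℝ, κ ≤ tnorm ζ → ‖ft ν ζ‖ ≤ η)
    (T : Finset (Fin n → ℝ)) (hT : Dissociated κ T)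
    (c : (Fin n → ℝ) → ℂ) (σ : ℝ) (hσ : 0 ≤ σ) :
    (∑' x : Fin n → ℤ, ν x *
        Real.exp (σ * (∑ ξ ∈ T,
          c ξ * Complex.exp ((2 * (Real.pi : ℂ) * Complex.I) * (pair ξ x : ℂ))).re))
      ≤ Real.exp (σ ^ 2 / 2 * ∑ ξ ∈ T, ‖c ξ‖ ^ 2)
        + η * Real.exp (σ * ∑ ξ ∈ T, ‖c ξ‖) := by
  classical
  obtain ⟨hν0, hνsum⟩ := hν
  have hνs : Summable ν := hνsum.summable
  obtain ⟨hη0, hη1⟩ := hη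
  -- the character e ζ x
  set e : (Fin n → ℝ) → (Fin n → ℤ) → ℂ :=
    fun ζ x => Complex.exp ((2 * (Real.pi : ℂ) * Complex.I) * ((pair ζ x : ℝ) : ℂ)) with he
  have habse : ∀ (ζ : Fin n → ℝ) (x : Fin n → ℤ), ‖e ζ x‖ = 1 := by
    intro ζ x
    rw [he, Complex.norm_exp]
    norm_num [Complex.mul_re, Complex.mul_im]
  have hnorm : ∀ ζ : Fin n → ℝ, (fun x : Fin n → ℤ => ‖(ν x : ℂ) * e ζ x‖) = ν := by
    intro ζ; funext x
    rw [norm_mul, habse, Complex.norm_real, Real.norm_eq_abs,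
      abs_of_nonneg (hν0 x), mul_one]
  have hSsumm : ∀ ζ : Fin n → ℝ, Summable (fun x : Fin n → ℤ => (ν x : ℂ) * e ζ x) := by
    intro ζ
    apply Summable.of_norm
    rw [hnorm]; exact hνs
  set S : (Fin n → ℝ) → ℂ := fun ζ => ∑' x : Fin n → ℤ, (ν x : ℂ) * e ζ x with hS
  have hSabs : ∀ ζ, ‖S ζ‖ ≤ 1 := by
    intro ζ
    rw [hS]
    calc ‖∑' x : Fin n → ℤ, (ν x : ℂ) * e ζ x‖
        ≤ ∑' x : Fin n → ℤ, ‖(ν x : ℂ) * e ζ x‖ :=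
          norm_tsum_le_tsum_norm (by rw [hnorm]; exact hνs)
      _ = ∑' x, ν x := by rw [hnorm]
      _ = 1 := hνsum.tsum_eq
  -- coefficients
  set t : {ξ // ξ ∈ T} → ℝ := fun ξ => σ * ‖c ξ.1‖ with ht
  set s : {ξ // ξ ∈ T} → ℝ :=
    fun ξ => if t ξ = 0 then 0 else Real.sinh (t ξ) / t ξ with hs
  have ht0 : ∀ ξ, 0 ≤ t ξ := fun ξ => mul_nonneg hσ (norm_nonneg _)
  have hs0 : ∀ ξ, 0 ≤ s ξ := by
    intro ξ; rw [hs]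
    dsimp only
    split
    · exact le_refl 0
    · exact div_nonneg (Real.sinh_nonneg_iff.mpr (ht0 ξ)) (ht0 ξ)
  have hst : ∀ ξ, s ξ * t ξ = Real.sinh (t ξ) := by
    intro ξ; rw [hs]
    dsimp only
    split
    · rename_i h; rw [h]; simp
    · rename_i h; field_simp
  set b : {ξ // ξ ∈ T} → ℤ → ℂ := fun ξ j =>
    if j = 0 then ((Real.cosh (t ξ) : ℝ) : ℂ)
    else if j = 1 then ((σ * s ξ / 2 : ℝ) : ℂ) * c ξ.1
    else ((σ * s ξ / 2 : ℝ) : ℂ) * (starRingEnd ℂ) (c ξ.1) with hb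
  have hsum3 : ∀ f : ℤ → ℂ, ∑ j ∈ ({-1, 0, 1} : Finset ℤ), f j = f (-1) + f 0 + f 1 := by
    intro f
    rw [Finset.sum_insert (by decide), Finset.sum_insert (by decide), Finset.sum_singleton]
    ring
  have hsum3' : ∀ f : ℤ → ℝ, ∑ j ∈ ({-1, 0, 1} : Finset ℤ), f j = f (-1) + f 0 + f 1 := by
    intro f
    rw [Finset.sum_insert (by decide), Finset.sum_insert (by decide), Finset.sum_singleton]
    ring
  have hbm1 : ∀ ξ, b ξ (-1) = ((σ * s ξ / 2 : ℝ) : ℂ) * (starRingEnd ℂ) (c ξ.1) := by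
    intro ξ; simp only [hb]; norm_num
  have hb0 : ∀ ξ, b ξ 0 = ((Real.cosh (t ξ) : ℝ) : ℂ) := by
    intro ξ; simp only [hb]; norm_num
  have hb1 : ∀ ξ, b ξ 1 = ((σ * s ξ / 2 : ℝ) : ℂ) * c ξ.1 := by
    intro ξ; simp only [hb]; norm_num
  have habsb : ∀ ξ, ∑ j ∈ ({-1, 0, 1} : Finset ℤ), ‖b ξ j‖ = Real.exp (t ξ) := by
    intro ξ
    rw [hsum3' (fun j => ‖b ξ j‖)]
    rw [hbm1, hb0, hb1]
    simp only [norm_mul, Complex.norm_real, Real.norm_eq_abs, Complex.norm_conj]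
    rw [abs_of_nonneg (by positivity : (0:ℝ) ≤ σ * s ξ / 2),
      abs_of_nonneg (Real.cosh_pos (x := t ξ)).le]
    have h3 : σ * s ξ / 2 * ‖c ξ.1‖ + σ * s ξ / 2 * ‖c ξ.1‖
        = Real.sinh (t ξ) := by rw [← hst ξ, ht]; ring
    have h4 := Real.cosh_add_sinh (t ξ)
    linarith
  -- the key pointwise factor identity
  have hfac : ∀ (ξ : {ξ // ξ ∈ T}) (x : Fin n → ℤ),
      ∑ j ∈ ({-1, 0, 1} : Finset ℤ),
          b ξ j * Complex.exp ((2 * (Real.pi : ℂ) * Complex.I) * (j : ℂ) * ((pair ξ.1 x : ℝ) : ℂ))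
        = (((Real.cosh (t ξ) + s ξ * (σ * (c ξ.1 * e ξ.1 x).re)) : ℝ) : ℂ) := by
    intro ξ x
    have he1 : Complex.exp ((2 * (Real.pi : ℂ) * Complex.I) * ((1 : ℤ) : ℂ) * ((pair ξ.1 x : ℝ) : ℂ))
        = e ξ.1 x := by
      rw [he]; norm_num
    have he0 : Complex.exp ((2 * (Real.pi : ℂ) * Complex.I) * ((0 : ℤ) : ℂ) * ((pair ξ.1 x : ℝ) : ℂ))
        = 1 := by
      norm_num
    have hm1 : Complex.exp ((2 * (Real.pi : ℂ) * Complex.I) * ((-1 : ℤ) : ℂ) * ((pair ξ.1 x : ℝ) : ℂ))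
        = (starRingEnd ℂ) (e ξ.1 x) := by
      rw [he, ← Complex.exp_conj]
      congr 1
      simp only [map_mul, Complex.conj_I, Complex.conj_ofReal, map_ofNat]
      push_cast; ring
    rw [hsum3 (fun j => b ξ j * Complex.exp ((2 * (Real.pi : ℂ) * Complex.I) * (j : ℂ) * ((pair ξ.1 x : ℝ) : ℂ)))]
    rw [he1, he0, hm1, hbm1, hb0, hb1, mul_one]
    calc ((σ * s ξ / 2 : ℝ) : ℂ) * (starRingEnd ℂ) (c ξ.1) * (starRingEnd ℂ) (e ξ.1 x)
          + ((Real.cosh (t ξ) : ℝ) : ℂ) + ((σ * s ξ / 2 : ℝ) : ℂ) * c ξ.1 * e ξ.1 x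
        = ((Real.cosh (t ξ) : ℝ) : ℂ) + ((σ * s ξ / 2 : ℝ) : ℂ) *
            (c ξ.1 * e ξ.1 x + (starRingEnd ℂ) (c ξ.1 * e ξ.1 x)) := by
          rw [map_mul]; ring
      _ = (((Real.cosh (t ξ) + s ξ * (σ * (c ξ.1 * e ξ.1 x).re)) : ℝ) : ℂ) := by
          rw [Complex.add_conj]; push_cast; ring
  -- pair linearity
  have hpairlin : ∀ (ε : {ξ // ξ ∈ T} → ℤ) (x : Fin n → ℤ),
      pair (fun i => ∑ ξ : {ξ // ξ ∈ T}, (ε ξ : ℝ) * ξ.1 i) x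
        = ∑ ξ : {ξ // ξ ∈ T}, (ε ξ : ℝ) * pair ξ.1 x := by
    intro ε x
    simp only [pair, Finset.sum_mul]
    rw [Finset.sum_comm]
    refine Finset.sum_congr rfl fun ξ _ => ?_
    rw [Finset.mul_sum]
    exact Finset.sum_congr rfl fun i _ => by ring
  -- expansion of the product over centered factors
  have hP : ∀ x : Fin n → ℤ,
      (((∏ ξ : {ξ // ξ ∈ T}, (Real.cosh (t ξ) + s ξ * (σ * (c ξ.1 * e ξ.1 x).re))) : ℝ) : ℂ)
        = ∑ ε ∈ Fintype.piFinset (fun _ : {ξ // ξ ∈ T} => ({-1, 0, 1} : Finset ℤ)),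
            (∏ ξ : {ξ // ξ ∈ T}, b ξ (ε ξ)) * e (fun i => ∑ ξ : {ξ // ξ ∈ T}, (ε ξ : ℝ) * ξ.1 i) x := by
    intro x
    rw [Complex.ofReal_prod]
    rw [Finset.prod_congr rfl fun (ξ : {ξ // ξ ∈ T}) _ => (hfac ξ x).symm]
    rw [Finset.prod_univ_sum]
    refine Finset.sum_congr rfl fun ε _ => ?_
    rw [Finset.prod_mul_distrib]
    congr 1
    rw [← Complex.exp_sum, he]
    congr 1
    rw [hpairlin]
    rw [Complex.ofReal_sum, Finset.mul_sum]
    refine Finset.sum_congr rfl fun ξ _ => ?_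
    push_cast
    ring
  -- main tsum identity
  have hterm : ∀ ε : {ξ // ξ ∈ T} → ℤ,
      Summable (fun x : Fin n → ℤ => (∏ ξ : {ξ // ξ ∈ T}, b ξ (ε ξ)) *
        ((ν x : ℂ) * e (fun i => ∑ ξ : {ξ // ξ ∈ T}, (ε ξ : ℝ) * ξ.1 i) x)) :=
    fun ε => (hSsumm _).mul_left _
  have key : ∑' x : Fin n → ℤ,
        ν x * ∏ ξ : {ξ // ξ ∈ T}, (Real.cosh (t ξ) + s ξ * (σ * (c ξ.1 * e ξ.1 x).re))
      = ∑ ε ∈ Fintype.piFinset (fun _ : {ξ // ξ ∈ T} => ({-1, 0, 1} : Finset ℤ)),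
          ((∏ ξ : {ξ // ξ ∈ T}, b ξ (ε ξ)) *
            S (fun i => ∑ ξ : {ξ // ξ ∈ T}, (ε ξ : ℝ) * ξ.1 i)).re := by
    have h1 : ∀ x : Fin n → ℤ,
        ν x * ∏ ξ : {ξ // ξ ∈ T}, (Real.cosh (t ξ) + s ξ * (σ * (c ξ.1 * e ξ.1 x).re))
          = ∑ ε ∈ Fintype.piFinset (fun _ : {ξ // ξ ∈ T} => ({-1, 0, 1} : Finset ℤ)),
              ((∏ ξ : {ξ // ξ ∈ T}, b ξ (ε ξ)) *
                ((ν x : ℂ) * e (fun i => ∑ ξ : {ξ // ξ ∈ T}, (ε ξ : ℝ) * ξ.1 i) x)).re := by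
      intro x
      calc ν x * ∏ ξ : {ξ // ξ ∈ T}, (Real.cosh (t ξ) + s ξ * (σ * (c ξ.1 * e ξ.1 x).re))
          = ((((ν x * ∏ ξ : {ξ // ξ ∈ T},
              (Real.cosh (t ξ) + s ξ * (σ * (c ξ.1 * e ξ.1 x).re))) : ℝ) : ℂ)).re :=
            (Complex.ofReal_re _).symm
        _ = ((∑ ε ∈ Fintype.piFinset (fun _ : {ξ // ξ ∈ T} => ({-1, 0, 1} : Finset ℤ)),
              (∏ ξ : {ξ // ξ ∈ T}, b ξ (ε ξ)) *
                ((ν x : ℂ) * e (fun i => ∑ ξ : {ξ // ξ ∈ T}, (ε ξ : ℝ) * ξ.1 i) x))).re := by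
            rw [Complex.ofReal_mul, hP x, Finset.mul_sum]
            congr 1
            exact Finset.sum_congr rfl fun ε _ => by ring
        _ = _ := Complex.re_sum _ _
    rw [tsum_congr h1, Summable.tsum_finsetSum (fun ε _ => (Complex.hasSum_re (hterm ε).hasSum).summable)]
    refine Finset.sum_congr rfl fun ε _ => ?_
    rw [← Complex.re_tsum (hterm ε), tsum_mul_left]
  -- spectral bound for nonzero sign patterns
  have hSη : ∀ ε ∈ Fintype.piFinset (fun _ : {ξ // ξ ∈ T} => ({-1, 0, 1} : Finset ℤ)),
      ε ≠ (0 : {ξ // ξ ∈ T} → ℤ) →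
      ‖S (fun i => ∑ ξ : {ξ // ξ ∈ T}, (ε ξ : ℝ) * ξ.1 i)‖ ≤ η := by
    intro ε hε hne
    have hft : S (fun i => ∑ ξ : {ξ // ξ ∈ T}, (ε ξ : ℝ) * ξ.1 i)
        = ft ν (fun i => -∑ ξ : {ξ // ξ ∈ T}, (ε ξ : ℝ) * ξ.1 i) := by
      rw [hS]
      unfold ft
      refine tsum_congr fun x => ?_
      have hp : pair (fun i => -∑ ξ : {ξ // ξ ∈ T}, (ε ξ : ℝ) * ξ.1 i) x
          = -pair (fun i => ∑ ξ : {ξ // ξ ∈ T}, (ε ξ : ℝ) * ξ.1 i) x := by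
        simp [pair, Finset.sum_neg_distrib, neg_mul]
      have hexp : -(2 * (Real.pi : ℂ) * Complex.I) *
            ((pair (fun i => -∑ ξ : {ξ // ξ ∈ T}, (ε ξ : ℝ) * ξ.1 i) x : ℝ) : ℂ)
          = 2 * (Real.pi : ℂ) * Complex.I *
            ((pair (fun i => ∑ ξ : {ξ // ξ ∈ T}, (ε ξ : ℝ) * ξ.1 i) x : ℝ) : ℂ) := by
        rw [hp]
        push_cast
        ring
      rw [hexp, he]
    rw [hft]
    apply hspec
    have hmem : ∀ ξ : {ξ // ξ ∈ T}, ε ξ = -1 ∨ ε ξ = 0 ∨ ε ξ = 1 := by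
      intro ξ
      have h := Fintype.mem_piFinset.mp hε ξ
      simpa using h
    obtain ⟨ξ₀, hξ₀⟩ : ∃ ξ : {ξ // ξ ∈ T}, ε ξ ≠ 0 := by
      by_contra h
      push_neg at h
      exact hne (funext h)
    set ε' : (Fin n → ℝ) → ℤ := fun ξ => if h : ξ ∈ T then -(ε ⟨ξ, h⟩) else 0 with hε'
    have h1 := hT ε' ?_ ?_
    · have heq : (fun i => -∑ ξ : {ξ // ξ ∈ T}, (ε ξ : ℝ) * ξ.1 i)
          = (fun i => ∑ ξ ∈ T, (ε' ξ : ℝ) * ξ i) := by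
        funext i
        calc -∑ ξ : {ξ // ξ ∈ T}, (ε ξ : ℝ) * ξ.1 i
            = ∑ ξ : {ξ // ξ ∈ T}, (ε' ξ.1 : ℝ) * ξ.1 i := by
              rw [← Finset.sum_neg_distrib]
              refine Finset.sum_congr rfl fun ξ _ => ?_
              simp only [hε']
              rw [dif_pos ξ.2]
              simp only [Subtype.coe_eta]
              push_cast
              ring
          _ = ∑ ξ ∈ T, (ε' ξ : ℝ) * ξ i := Finset.sum_coe_sort T (fun a => (ε' a : ℝ) * a i)
      rw [heq]
      exact h1
    · intro ξ
      simp only [hε']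
      split
      · rename_i h
        rcases hmem ⟨ξ, h⟩ with h' | h' | h' <;> simp [h']
      · exact Or.inr (Or.inl rfl)
    · refine ⟨ξ₀.1, ξ₀.2, ?_⟩
      simp only [hε']
      rw [dif_pos ξ₀.2]
      simpa using hξ₀
  -- the zero sign pattern
  have h0mem : (0 : {ξ // ξ ∈ T} → ℤ) ∈
      Fintype.piFinset (fun _ : {ξ // ξ ∈ T} => ({-1, 0, 1} : Finset ℤ)) :=
    Fintype.mem_piFinset.mpr fun ξ => by simp
  have hc0 : (∏ ξ : {ξ // ξ ∈ T}, b ξ ((0 : {ξ // ξ ∈ T} → ℤ) ξ))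
      = (((∏ ξ : {ξ // ξ ∈ T}, Real.cosh (t ξ)) : ℝ) : ℂ) := by
    rw [Complex.ofReal_prod]
    exact Finset.prod_congr rfl fun ξ _ => hb0 ξ
  have hζ0 : S (fun i => ∑ ξ : {ξ // ξ ∈ T}, (((0 : {ξ // ξ ∈ T} → ℤ) ξ : ℤ) : ℝ) * ξ.1 i) = 1 := by
    simp only [hS]
    have h1 : ∀ x : Fin n → ℤ,
        (ν x : ℂ) * e (fun i => ∑ ξ : {ξ // ξ ∈ T}, (((0 : {ξ // ξ ∈ T} → ℤ) ξ : ℤ) : ℝ) * ξ.1 i) x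
          = (ν x : ℂ) := by
      intro x
      simp only [he]
      have : pair (fun i => ∑ ξ : {ξ // ξ ∈ T}, (((0 : {ξ // ξ ∈ T} → ℤ) ξ : ℤ) : ℝ) * ξ.1 i) x = 0 := by
        simp [pair]
      rw [this]
      simp
    rw [tsum_congr h1, ← Complex.ofReal_tsum, hνsum.tsum_eq, Complex.ofReal_one]
  -- elementary bounds on the factors
  have hre_le : ∀ (ξ : {ξ // ξ ∈ T}) (x : Fin n → ℤ),
      |σ * (c ξ.1 * e ξ.1 x).re| ≤ t ξ := by
    intro ξ x
    rw [abs_mul, abs_of_nonneg hσ, ht]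
    have h := Complex.abs_re_le_norm (c ξ.1 * e ξ.1 x)
    rw [norm_mul, habse, mul_one] at h
    exact mul_le_mul_of_nonneg_left h hσ
  have hfac_le : ∀ (ξ : {ξ // ξ ∈ T}) (x : Fin n → ℤ),
      Real.cosh (t ξ) + s ξ * (σ * (c ξ.1 * e ξ.1 x).re) ≤ Real.exp (t ξ) := by
    intro ξ x
    have h1 : s ξ * (σ * (c ξ.1 * e ξ.1 x).re) ≤ s ξ * t ξ :=
      mul_le_mul_of_nonneg_left (le_of_abs_le (hre_le ξ x)) (hs0 ξ)
    rw [hst] at h1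
    have h4 := Real.cosh_add_sinh (t ξ)
    linarith
  have hfac_nn : ∀ (ξ : {ξ // ξ ∈ T}) (x : Fin n → ℤ),
      0 ≤ Real.cosh (t ξ) + s ξ * (σ * (c ξ.1 * e ξ.1 x).re) := by
    intro ξ x
    have h0 : -(t ξ) ≤ σ * (c ξ.1 * e ξ.1 x).re := neg_le_of_abs_le (hre_le ξ x)
    have h1 : s ξ * (-(t ξ)) ≤ s ξ * (σ * (c ξ.1 * e ξ.1 x).re) :=
      mul_le_mul_of_nonneg_left h0 (hs0 ξ)
    have h2 := Real.cosh_sub_sinh (t ξ)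
    have h3 := (Real.exp_pos (-(t ξ))).le
    have h4 := hst ξ
    nlinarith
  -- pointwise product bound
  have hpt : ∀ x : Fin n → ℤ,
      Real.exp (σ * (∑ ξ ∈ T,
          c ξ * Complex.exp ((2 * (Real.pi : ℂ) * Complex.I) * (pair ξ x : ℂ))).re)
        ≤ ∏ ξ : {ξ // ξ ∈ T}, (Real.cosh (t ξ) + s ξ * (σ * (c ξ.1 * e ξ.1 x).re)) := by
    intro x
    have hsumre : σ * (∑ ξ ∈ T,
          c ξ * Complex.exp ((2 * (Real.pi : ℂ) * Complex.I) * (pair ξ x : ℂ))).re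
        = ∑ ξ : {ξ // ξ ∈ T}, σ * (c ξ.1 * e ξ.1 x).re := by
      rw [← Finset.sum_coe_sort T
        (fun a => c a * Complex.exp ((2 * (Real.pi : ℂ) * Complex.I) * (pair a x : ℂ)))]
      rw [Complex.re_sum, Finset.mul_sum]
    rw [hsumre, Real.exp_sum]
    refine Finset.prod_le_prod (fun ξ _ => (Real.exp_pos _).le) (fun ξ _ => ?_)
    calc Real.exp (σ * (c ξ.1 * e ξ.1 x).re)
        ≤ Real.cosh (t ξ) + (if t ξ = 0 then 0 else Real.sinh (t ξ) / t ξ) *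
            (σ * (c ξ.1 * e ξ.1 x).re) := rudin_exp_le _ _ (hre_le ξ x)
      _ = Real.cosh (t ξ) + s ξ * (σ * (c ξ.1 * e ξ.1 x).re) := by simp only [hs]
  -- summability of both sides
  have hKt : ∑ ξ : {ξ // ξ ∈ T}, t ξ = σ * ∑ ξ ∈ T, ‖c ξ‖ := by
    rw [Finset.mul_sum]
    exact Finset.sum_coe_sort T (fun a => σ * ‖c a‖)
  have hexpK : ∀ x : Fin n → ℤ,
      Real.exp (σ * (∑ ξ ∈ T,
          c ξ * Complex.exp ((2 * (Real.pi : ℂ) * Complex.I) * (pair ξ x : ℂ))).re)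
        ≤ Real.exp (σ * ∑ ξ ∈ T, ‖c ξ‖) := by
    intro x
    calc Real.exp (σ * _) ≤ ∏ ξ : {ξ // ξ ∈ T},
          (Real.cosh (t ξ) + s ξ * (σ * (c ξ.1 * e ξ.1 x).re)) := hpt x
      _ ≤ ∏ ξ : {ξ // ξ ∈ T}, Real.exp (t ξ) :=
          Finset.prod_le_prod (fun ξ _ => hfac_nn ξ x) (fun ξ _ => hfac_le ξ x)
      _ = Real.exp (∑ ξ : {ξ // ξ ∈ T}, t ξ) := (Real.exp_sum _ _).symm
      _ = Real.exp (σ * ∑ ξ ∈ T, ‖c ξ‖) := by rw [hKt]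
  have hprodK : ∀ x : Fin n → ℤ,
      ∏ ξ : {ξ // ξ ∈ T}, (Real.cosh (t ξ) + s ξ * (σ * (c ξ.1 * e ξ.1 x).re))
        ≤ Real.exp (σ * ∑ ξ ∈ T, ‖c ξ‖) := by
    intro x
    calc ∏ ξ : {ξ // ξ ∈ T}, (Real.cosh (t ξ) + s ξ * (σ * (c ξ.1 * e ξ.1 x).re))
        ≤ ∏ ξ : {ξ // ξ ∈ T}, Real.exp (t ξ) :=
          Finset.prod_le_prod (fun ξ _ => hfac_nn ξ x) (fun ξ _ => hfac_le ξ x)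
      _ = Real.exp (∑ ξ : {ξ // ξ ∈ T}, t ξ) := (Real.exp_sum _ _).symm
      _ = Real.exp (σ * ∑ ξ ∈ T, ‖c ξ‖) := by rw [hKt]
  have hsumm1 : Summable (fun x : Fin n → ℤ => ν x *
      Real.exp (σ * (∑ ξ ∈ T,
        c ξ * Complex.exp ((2 * (Real.pi : ℂ) * Complex.I) * (pair ξ x : ℂ))).re)) := by
    refine Summable.of_nonneg_of_le
      (fun x => mul_nonneg (hν0 x) (Real.exp_pos _).le)
      (fun x => mul_le_mul_of_nonneg_left (hexpK x) (hν0 x))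
      (hνs.mul_right _)
  have hsumm2 : Summable (fun x : Fin n → ℤ => ν x *
      ∏ ξ : {ξ // ξ ∈ T}, (Real.cosh (t ξ) + s ξ * (σ * (c ξ.1 * e ξ.1 x).re))) := by
    refine Summable.of_nonneg_of_le
      (fun x => mul_nonneg (hν0 x) (Finset.prod_nonneg fun ξ _ => hfac_nn ξ x))
      (fun x => mul_le_mul_of_nonneg_left (hprodK x) (hν0 x))
      (hνs.mul_right _)
  -- the cosh product bound
  have hcosh : (∏ ξ : {ξ // ξ ∈ T}, Real.cosh (t ξ))
      ≤ Real.exp (σ ^ 2 / 2 * ∑ ξ ∈ T, ‖c ξ‖ ^ 2) := by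
    calc ∏ ξ : {ξ // ξ ∈ T}, Real.cosh (t ξ)
        ≤ ∏ ξ : {ξ // ξ ∈ T}, Real.exp (t ξ ^ 2 / 2) :=
          Finset.prod_le_prod (fun ξ _ => (Real.cosh_pos (x := t ξ)).le)
            (fun ξ _ => Real.cosh_le_exp_half_sq _)
      _ = Real.exp (∑ ξ : {ξ // ξ ∈ T}, t ξ ^ 2 / 2) := (Real.exp_sum _ _).symm
      _ = Real.exp (σ ^ 2 / 2 * ∑ ξ ∈ T, ‖c ξ‖ ^ 2) := by
          congr 1
          rw [Finset.mul_sum, ← Finset.sum_coe_sort T (fun a => σ ^ 2 / 2 * ‖c a‖ ^ 2)]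
          refine Finset.sum_congr rfl fun ξ _ => ?_
          simp only [ht]
          ring
  -- final chain
  calc (∑' x : Fin n → ℤ, ν x * Real.exp (σ * (∑ ξ ∈ T,
          c ξ * Complex.exp ((2 * (Real.pi : ℂ) * Complex.I) * (pair ξ x : ℂ))).re))
      ≤ ∑' x : Fin n → ℤ, ν x *
          ∏ ξ : {ξ // ξ ∈ T}, (Real.cosh (t ξ) + s ξ * (σ * (c ξ.1 * e ξ.1 x).re)) :=
        hsumm1.tsum_le_tsum (fun x => mul_le_mul_of_nonneg_left (hpt x) (hν0 x)) hsumm2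
    _ = ∑ ε ∈ Fintype.piFinset (fun _ : {ξ // ξ ∈ T} => ({-1, 0, 1} : Finset ℤ)),
          ((∏ ξ : {ξ // ξ ∈ T}, b ξ (ε ξ)) *
            S (fun i => ∑ ξ : {ξ // ξ ∈ T}, (ε ξ : ℝ) * ξ.1 i)).re := key
    _ = ((∏ ξ : {ξ // ξ ∈ T}, b ξ ((0 : {ξ // ξ ∈ T} → ℤ) ξ)) *
            S (fun i => ∑ ξ : {ξ // ξ ∈ T}, (((0 : {ξ // ξ ∈ T} → ℤ) ξ : ℤ) : ℝ) * ξ.1 i)).re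
        + ∑ ε ∈ (Fintype.piFinset (fun _ : {ξ // ξ ∈ T} => ({-1, 0, 1} : Finset ℤ))).erase 0,
            ((∏ ξ : {ξ // ξ ∈ T}, b ξ (ε ξ)) *
              S (fun i => ∑ ξ : {ξ // ξ ∈ T}, (ε ξ : ℝ) * ξ.1 i)).re :=
        (Finset.add_sum_erase _ _ h0mem).symm
    _ ≤ (∏ ξ : {ξ // ξ ∈ T}, Real.cosh (t ξ))
        + η * Real.exp (σ * ∑ ξ ∈ T, ‖c ξ‖) := by
        refine add_le_add (le_of_eq ?_) ?_
        · rw [hc0, hζ0, mul_one, Complex.ofReal_re]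
        · calc ∑ ε ∈ (Fintype.piFinset (fun _ : {ξ // ξ ∈ T} => ({-1, 0, 1} : Finset ℤ))).erase 0,
                ((∏ ξ : {ξ // ξ ∈ T}, b ξ (ε ξ)) *
                  S (fun i => ∑ ξ : {ξ // ξ ∈ T}, (ε ξ : ℝ) * ξ.1 i)).re
              ≤ ∑ ε ∈ (Fintype.piFinset (fun _ : {ξ // ξ ∈ T} => ({-1, 0, 1} : Finset ℤ))).erase 0,
                  η * ‖∏ ξ : {ξ // ξ ∈ T}, b ξ (ε ξ)‖ := by
                refine Finset.sum_le_sum fun ε hε => ?_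
                have hη' := hSη ε (Finset.mem_of_mem_erase hε) (Finset.ne_of_mem_erase hε)
                calc ((∏ ξ : {ξ // ξ ∈ T}, b ξ (ε ξ)) *
                        S (fun i => ∑ ξ : {ξ // ξ ∈ T}, (ε ξ : ℝ) * ξ.1 i)).re
                    ≤ ‖(∏ ξ : {ξ // ξ ∈ T}, b ξ (ε ξ)) *
                        S (fun i => ∑ ξ : {ξ // ξ ∈ T}, (ε ξ : ℝ) * ξ.1 i)‖ := Complex.re_le_norm _
                  _ = ‖∏ ξ : {ξ // ξ ∈ T}, b ξ (ε ξ)‖ *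
                        ‖S (fun i => ∑ ξ : {ξ // ξ ∈ T}, (ε ξ : ℝ) * ξ.1 i)‖ :=
                      norm_mul _ _
                  _ ≤ ‖∏ ξ : {ξ // ξ ∈ T}, b ξ (ε ξ)‖ * η :=
                      mul_le_mul_of_nonneg_left hη' (norm_nonneg _)
                  _ = η * ‖∏ ξ : {ξ // ξ ∈ T}, b ξ (ε ξ)‖ := mul_comm _ _
            _ ≤ ∑ ε ∈ Fintype.piFinset (fun _ : {ξ // ξ ∈ T} => ({-1, 0, 1} : Finset ℤ)),
                  η * ‖∏ ξ : {ξ // ξ ∈ T}, b ξ (ε ξ)‖ :=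
                Finset.sum_le_sum_of_subset_of_nonneg (Finset.erase_subset _ _)
                  (fun ε _ _ => mul_nonneg hη0 (norm_nonneg _))
            _ = η * ∑ ε ∈ Fintype.piFinset (fun _ : {ξ // ξ ∈ T} => ({-1, 0, 1} : Finset ℤ)),
                  ‖∏ ξ : {ξ // ξ ∈ T}, b ξ (ε ξ)‖ := by rw [Finset.mul_sum]
            _ = η * Real.exp (σ * ∑ ξ ∈ T, ‖c ξ‖) := by
                congr 1
                calc ∑ ε ∈ Fintype.piFinset (fun _ : {ξ // ξ ∈ T} => ({-1, 0, 1} : Finset ℤ)),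
                      ‖∏ ξ : {ξ // ξ ∈ T}, b ξ (ε ξ)‖
                    = ∑ ε ∈ Fintype.piFinset (fun _ : {ξ // ξ ∈ T} => ({-1, 0, 1} : Finset ℤ)),
                        ∏ ξ : {ξ // ξ ∈ T}, ‖b ξ (ε ξ)‖ :=
                      Finset.sum_congr rfl fun ε _ => Complex.norm_prod _ _
                  _ = ∏ ξ : {ξ // ξ ∈ T}, ∑ j ∈ ({-1, 0, 1} : Finset ℤ), ‖b ξ j‖ :=
                      Finset.sum_prod_piFinset ({-1, 0, 1} : Finset ℤ)
                        (fun ξ j => ‖b ξ j‖)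
                  _ = ∏ ξ : {ξ // ξ ∈ T}, Real.exp (t ξ) :=
                      Finset.prod_congr rfl fun ξ _ => habsb ξ
                  _ = Real.exp (∑ ξ : {ξ // ξ ∈ T}, t ξ) := (Real.exp_sum _ _).symm
                  _ = Real.exp (σ * ∑ ξ ∈ T, ‖c ξ‖) := by rw [hKt]
    _ ≤ Real.exp (σ ^ 2 / 2 * ∑ ξ ∈ T, ‖c ξ‖ ^ 2)
        + η * Real.exp (σ * ∑ ξ ∈ T, ‖c ξ‖) := add_le_add_left hcosh _
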